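/- Let A and B be real N×m matrices, Y a real d×m matrix, and β > 0, and suppose A * Bᵀ = 0 and Y * Bᵀ = 0. Let X be the (2N)×m matrix stacking A on top of B. Then X * Xᵀ + β • 1 is the 2×2 block-diagonal matrix with diagonal blocks A * Aᵀ + β • 1 and B * Bᵀ + β • 1, its inverse is the block-diagonal matrix with diagonal blocks (A * Aᵀ + β • 1)⁻¹ and (B * Bᵀ + β • 1)⁻¹, and the ridge readout matrix W = Y * Xᵀ * (X * Xᵀ + β • 1)⁻¹ equals [Y * Aᵀ * (A * Aᵀ + β • 1)⁻¹, 0]; in particular its square-readout block is zero and its linear-readout block coincides with the ridge readout trained on the linear response data alone. -/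

import Mathlib

open Matrix

lemma gram_ridge_posDef {N m : ℕ} (A : Matrix (Fin N) (Fin m) ℝ) {β : ℝ} (hβ : 0 < β) :
    (A * A.transpose + β • (1 : Matrix (Fin N) (Fin N) ℝ)).PosDef := by
  have h1 : (β • (1 : Matrix (Fin N) (Fin N) ℝ)).PosDef := by
    rw [smul_one_eq_diagonal]
    exact Matrix.posDef_diagonal_iff.2 fun _ => hβ
  have h2 : (A * A.transpose).PosSemidef := by
    simpa using Matrix.posSemidef_self_mul_conjTranspose A
  exact Matrix.PosDef.posSemidef_add h2 h1

lemma blockdiag_inv {N : ℕ} (M P : Matrix (Fin N) (Fin N) ℝ)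
    (hM : IsUnit M) (hP : IsUnit P) :
    (Matrix.fromBlocks M 0 0 P)⁻¹ = Matrix.fromBlocks M⁻¹ 0 0 P⁻¹ := by
  apply Matrix.inv_eq_right_inv
  rw [Matrix.fromBlocks_multiply]
  simp [Matrix.mul_nonsing_inv _ ((Matrix.isUnit_iff_isUnit_det _).1 hM),
    Matrix.mul_nonsing_inv _ ((Matrix.isUnit_iff_isUnit_det _).1 hP),
    Matrix.fromBlocks_one]

/-- If the linear and square response blocks are orthogonal (`A Bᵀ = 0`) and the
targets are orthogonal to the square block (`Y Bᵀ = 0`), then the ridge Gram matrix is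
block diagonal, so is its inverse, and the ridge readout `W = Y Xᵀ (X Xᵀ + β I)⁻¹`
equals `[Y Aᵀ (A Aᵀ + β I)⁻¹, 0]`: its square-readout block vanishes and its linear
block is the ridge readout trained on the linear response data alone. -/
theorem ridge_block_diagonal_readout {N m d : ℕ}
    (A B : Matrix (Fin N) (Fin m) ℝ) (Y : Matrix (Fin d) (Fin m) ℝ)
    (β : ℝ) (hβ : 0 < β)
    (hAB : A * B.transpose = 0) (hYB : Y * B.transpose = 0) :
    let X : Matrix (Fin N ⊕ Fin N) (Fin m) ℝ := Matrix.fromRows A B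
    (X * X.transpose + β • (1 : Matrix (Fin N ⊕ Fin N) (Fin N ⊕ Fin N) ℝ) =
        Matrix.fromBlocks (A * A.transpose + β • 1) 0 0 (B * B.transpose + β • 1)) ∧
      ((X * X.transpose + β • (1 : Matrix (Fin N ⊕ Fin N) (Fin N ⊕ Fin N) ℝ))⁻¹ =
        Matrix.fromBlocks (A * A.transpose + β • 1)⁻¹ 0 0 (B * B.transpose + β • 1)⁻¹) ∧
      (Y * X.transpose *
          (X * X.transpose + β • (1 : Matrix (Fin N ⊕ Fin N) (Fin N ⊕ Fin N) ℝ))⁻¹ =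
        Matrix.fromCols (Y * A.transpose * (A * A.transpose + β • 1)⁻¹) 0) := by
  intro X
  have hBA : B * A.transpose = 0 := by
    have := congrArg Matrix.transpose hAB
    simpa [Matrix.transpose_mul] using this
  have hXT : X.transpose = Matrix.fromCols A.transpose B.transpose := by
    simp [X, Matrix.transpose_fromRows]
  have h1 : X * X.transpose + β • (1 : Matrix (Fin N ⊕ Fin N) (Fin N ⊕ Fin N) ℝ) =
      Matrix.fromBlocks (A * A.transpose + β • 1) 0 0 (B * B.transpose + β • 1) := by
    rw [hXT, Matrix.fromRows_mul_fromCols, ← Matrix.fromBlocks_one,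
      Matrix.fromBlocks_smul, Matrix.fromBlocks_add]
    simp [hAB, hBA]
  have hAunit : IsUnit (A * A.transpose + β • (1 : Matrix (Fin N) (Fin N) ℝ)) :=
    (gram_ridge_posDef A hβ).isUnit
  have hBunit : IsUnit (B * B.transpose + β • (1 : Matrix (Fin N) (Fin N) ℝ)) :=
    (gram_ridge_posDef B hβ).isUnit
  have h2 : (X * X.transpose + β • (1 : Matrix (Fin N ⊕ Fin N) (Fin N ⊕ Fin N) ℝ))⁻¹ =
      Matrix.fromBlocks (A * A.transpose + β • 1)⁻¹ 0 0 (B * B.transpose + β • 1)⁻¹ := by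
    rw [h1, blockdiag_inv _ _ hAunit hBunit]
  refine ⟨h1, h2, ?_⟩
  rw [h2, hXT, Matrix.mul_fromCols, hYB, Matrix.fromCols_mul_fromBlocks]
  simp
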